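/- Let m = 4k with k ≥ 2 an integer. Define A = {0, 1, ..., k} ∪ {2k, 2k+1, ..., 3k} and B = {k, k+1, ..., 2k} ∪ {3k, 3k+1, ..., 4k-1, 0} as subsets of Z_m. Then A ∪ B = Z_m, A ∩ B = {0, k, 2k, 3k} (so |A ∩ B| = 4), B ≠ A + m/2, and R_A(n) = R_B(n) for all n ∈ Z_m. -/
import Mathlib


open Finset

/-- Representation function: number of ordered pairs (a, a') in A × A with a + a' = n. -/
def repFn {m : ℕ} (A : Finset (ZMod m)) (n : ZMod m) : ℕ :=
  ((A ×ˢ A).filter (fun p => p.1 + p.2 = n)).card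

/-- Shifting an interval image by a nat cast. -/
lemma icc_shift {m : ℕ} (a b c : ℕ) :
    ((Finset.Icc a b).image (Nat.cast : ℕ → ZMod m)).image (fun x => x + ((c : ℕ) : ZMod m)) =
      (Finset.Icc (a + c) (b + c)).image (Nat.cast : ℕ → ZMod m) := by
  rw [Finset.image_image, ← Finset.image_add_right_Icc, Finset.image_image]
  apply Finset.image_congr
  intro n _
  simp only [Function.comp_apply]
  push_cast
  ring

/-- Interval images are periodic mod m. -/
lemma icc_period {m : ℕ} (a b : ℕ) :
    (Finset.Icc (a + m) (b + m)).image (Nat.cast : ℕ → ZMod m) =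
      (Finset.Icc a b).image (Nat.cast : ℕ → ZMod m) := by
  rw [← Finset.image_add_right_Icc, Finset.image_image]
  apply Finset.image_congr
  intro n _
  simp only [Function.comp_apply]
  push_cast
  simp

lemma mem_icc_image {m : ℕ} [NeZero m] (a b : ℕ) (hb : b < m) (x : ZMod m) :
    x ∈ (Finset.Icc a b).image (Nat.cast : ℕ → ZMod m) ↔ a ≤ x.val ∧ x.val ≤ b := by
  simp only [Finset.mem_image, Finset.mem_Icc]
  constructor
  · rintro ⟨n, ⟨h1, h2⟩, rfl⟩
    rw [ZMod.val_cast_of_lt (lt_of_le_of_lt h2 hb)]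
    exact ⟨h1, h2⟩
  · rintro ⟨h1, h2⟩
    exact ⟨x.val, ⟨h1, h2⟩, ZMod.natCast_zmod_val x⟩

lemma eq_cast_iff_val {m : ℕ} [NeZero m] (n : ℕ) (hn : n < m) (x : ZMod m) :
    x = (n : ZMod m) ↔ x.val = n := by
  constructor
  · rintro rfl; exact ZMod.val_cast_of_lt hn
  · intro h; rw [← h, ZMod.natCast_zmod_val]

/-- Shifting both coordinates. -/
lemma repFn_image {m : ℕ} (A : Finset (ZMod m)) (c n : ZMod m) :
    repFn (A.image (fun x => x + c)) n = repFn A (n - c - c) := by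
  unfold repFn
  refine Finset.card_bij' (fun p _ => (p.1 - c, p.2 - c)) (fun p _ => (p.1 + c, p.2 + c))
    (fun p hp => ?_) (fun p hp => ?_) (fun p _ => ?_) (fun p _ => ?_)
  ·
    simp only [Finset.mem_filter, Finset.mem_product, Finset.mem_image] at hp ⊢
    obtain ⟨⟨⟨a, ha, ha'⟩, ⟨b, hb, hb'⟩⟩, hsum⟩ := hp
    refine ⟨⟨?_, ?_⟩, ?_⟩
    · rw [← ha']; simpa using ha
    · rw [← hb']; simpa using hb
    · rw [← hsum]; ring
  · simp only [Finset.mem_filter, Finset.mem_product, Finset.mem_image] at hp ⊢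
    obtain ⟨⟨ha, hb⟩, hsum⟩ := hp
    exact ⟨⟨⟨p.1, ha, rfl⟩, ⟨p.2, hb, rfl⟩⟩, by rw [← sub_eq_zero] at hsum ⊢; rw [← hsum]; ring⟩
  · simp
  · simp

/-- Shifting one coordinate, given translation invariance. -/
lemma repFn_shift {m : ℕ} (A : Finset (ZMod m)) (c n : ZMod m)
    (h : A.image (fun x => x + c) = A) : repFn A (n + c) = repFn A n := by
  have hmem : ∀ x : ZMod m, x ∈ A ↔ x + c ∈ A := by
    intro x
    constructor
    · intro hx; rw [← h]; exact Finset.mem_image_of_mem _ hx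
    · intro hx
      rw [← h] at hx
      obtain ⟨a, ha, ha'⟩ := Finset.mem_image.mp hx
      have : a = x := by
        have := add_right_cancel ha'; exact this
      rwa [← this]
  unfold repFn
  refine Finset.card_bij' (fun p _ => (p.1 - c, p.2)) (fun p _ => (p.1 + c, p.2))
    (fun p hp => ?_) (fun p hp => ?_) (fun p _ => ?_) (fun p _ => ?_)
  · simp only [Finset.mem_filter, Finset.mem_product] at hp ⊢
    obtain ⟨⟨h1, h2⟩, hsum⟩ := hp
    refine ⟨⟨?_, h2⟩, ?_⟩
    · rw [hmem (p.1 - c), sub_add_cancel]; exact h1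
    · rw [sub_add_eq_add_sub, hsum, add_sub_cancel_right]
  · simp only [Finset.mem_filter, Finset.mem_product] at hp ⊢
    obtain ⟨⟨h1, h2⟩, hsum⟩ := hp
    refine ⟨⟨(hmem p.1).mp h1, h2⟩, ?_⟩
    rw [add_right_comm, hsum]
  · simp
  · simp

theorem stmt4 (m k : ℕ) (hk : 2 ≤ k) (hm : m = 4 * k) [NeZero m]
    (A B : Finset (ZMod m))
    (hA : A = (Finset.Icc 0 k).image (Nat.cast : ℕ → ZMod m) ∪
        (Finset.Icc (2 * k) (3 * k)).image (Nat.cast : ℕ → ZMod m))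
    (hB : B = (Finset.Icc k (2 * k)).image (Nat.cast : ℕ → ZMod m) ∪
        (Finset.Icc (3 * k) (4 * k - 1)).image (Nat.cast : ℕ → ZMod m) ∪ {0}) :
    A ∪ B = Finset.univ ∧
    A ∩ B = ({(0 : ZMod m), ((k : ℕ) : ZMod m), ((2 * k : ℕ) : ZMod m), ((3 * k : ℕ) : ZMod m)} : Finset (ZMod m)) ∧
    (A ∩ B).card = 4 ∧
    B ≠ A.image (fun x => x + ((m / 2 : ℕ) : ZMod m)) ∧
    (∀ n : ZMod m, repFn A n = repFn B n) := by
  subst hm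
  have hk0 : 0 < k := by omega
  -- membership characterizations
  have hAm : ∀ x : ZMod (4 * k), x ∈ A ↔ x.val ≤ k ∨ (2 * k ≤ x.val ∧ x.val ≤ 3 * k) := by
    intro x
    rw [hA, Finset.mem_union, mem_icc_image 0 k (by omega), mem_icc_image (2*k) (3*k) (by omega)]
    omega
  have hBm : ∀ x : ZMod (4 * k), x ∈ B ↔
      (k ≤ x.val ∧ x.val ≤ 2 * k) ∨ (3 * k ≤ x.val ∧ x.val ≤ 4 * k - 1) ∨ x.val = 0 := by
    intro x
    rw [hB, Finset.mem_union, Finset.mem_union, mem_icc_image k (2*k) (by omega),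
      mem_icc_image (3*k) (4*k-1) (by omega), Finset.mem_singleton, ← ZMod.val_eq_zero]
    tauto
  -- key set identities
  have hA2k : A.image (fun x => x + ((2 * k : ℕ) : ZMod (4 * k))) = A := by
    rw [hA, Finset.image_union, icc_shift, icc_shift,
      show 0 + 2 * k = 2 * k from by ring, show k + 2 * k = 3 * k from by ring,
      show 2 * k + 2 * k = 0 + 4 * k from by ring, show 3 * k + 2 * k = k + 4 * k from by ring,
      icc_period]
    rw [Finset.union_comm]
  have hBAk : B = A.image (fun x => x + ((k : ℕ) : ZMod (4 * k))) := by
    rw [hA, hB, Finset.image_union, icc_shift, icc_shift]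
    have h1 : Finset.Icc (2*k+k) (3*k+k) = insert (4*k) (Finset.Icc (3*k) (4*k-1)) := by
      rw [show 2*k+k = 3*k by ring, show 3*k+k = 4*k by ring]
      ext n; simp [Finset.mem_Icc, Finset.mem_insert]; omega
    rw [show (0 + k) = k by ring, show k + k = 2 * k by ring, h1, Finset.image_insert]
    have h0 : ((4 * k : ℕ) : ZMod (4 * k)) = 0 := by
      exact_mod_cast ZMod.natCast_self (4 * k)
    rw [h0]
    ext x
    simp only [Finset.mem_union, Finset.mem_insert, Finset.mem_singleton]
    tauto
  refine ⟨?_, ?_, ?_, ?_, ?_⟩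
  · -- union
    ext x
    have := ZMod.val_lt x
    simp only [Finset.mem_union, Finset.mem_univ, iff_true, hAm, hBm]
    omega
  · -- intersection
    ext x
    have hvx := ZMod.val_lt x
    simp only [Finset.mem_inter, Finset.mem_insert, Finset.mem_singleton, hAm x, hBm x,
      ← ZMod.val_eq_zero, eq_cast_iff_val (m := 4*k) k (by omega), eq_cast_iff_val (m := 4*k) (2*k) (by omega),
      eq_cast_iff_val (m := 4*k) (3*k) (by omega)]
    omega
  · -- cardinality
    have hinter : A ∩ B = ({(0 : ZMod (4*k)), ((k : ℕ) : ZMod (4*k)), ((2 * k : ℕ) : ZMod (4*k)), ((3 * k : ℕ) : ZMod (4*k))} : Finset (ZMod (4*k))) := by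
      ext x
      have hvx := ZMod.val_lt x
      simp only [Finset.mem_inter, Finset.mem_insert, Finset.mem_singleton, hAm x, hBm x,
        ← ZMod.val_eq_zero, eq_cast_iff_val (m := 4*k) k (by omega), eq_cast_iff_val (m := 4*k) (2*k) (by omega),
        eq_cast_iff_val (m := 4*k) (3*k) (by omega)]
      omega
    rw [hinter]
    have v0 : ((0 : ZMod (4*k))).val = 0 := ZMod.val_zero
    have vk : (((k : ℕ) : ZMod (4*k))).val = k := ZMod.val_cast_of_lt (by omega)
    have v2k : (((2*k : ℕ) : ZMod (4*k))).val = 2*k := ZMod.val_cast_of_lt (by omega)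
    have v3k : (((3*k : ℕ) : ZMod (4*k))).val = 3*k := ZMod.val_cast_of_lt (by omega)
    rw [Finset.card_insert_of_notMem, Finset.card_insert_of_notMem,
      Finset.card_insert_of_notMem, Finset.card_singleton]
    · simp only [Finset.mem_singleton]
      intro h; have := congrArg ZMod.val h; rw [v2k, v3k] at this; omega
    · simp only [Finset.mem_insert, Finset.mem_singleton]
      rintro (h | h) <;> (have := congrArg ZMod.val h)
      · rw [vk, v2k] at this; omega
      · rw [vk, v3k] at this; omega
    · simp only [Finset.mem_insert, Finset.mem_singleton]
      rintro (h | h | h) <;> (have := congrArg ZMod.val h)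
      · rw [v0, vk] at this; omega
      · rw [v0, v2k] at this; omega
      · rw [v0, v3k] at this; omega
  · -- B ≠ A + m/2
    have hdiv : (4 * k) / 2 = 2 * k := by omega
    rw [hdiv, hA2k]
    intro h
    have h1A : ((1 : ℕ) : ZMod (4*k)) ∈ A := by
      rw [hAm, ZMod.val_cast_of_lt (by omega)]; omega
    have h1B : ((1 : ℕ) : ZMod (4*k)) ∉ B := by
      rw [hBm, ZMod.val_cast_of_lt (by omega)]; omega
    rw [h] at h1B
    exact h1B h1A
  · -- representation functions
    intro n
    rw [hBAk, repFn_image]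
    have hc : ((k : ℕ) : ZMod (4*k)) + ((k : ℕ) : ZMod (4*k)) = ((2 * k : ℕ) : ZMod (4*k)) := by
      push_cast; ring
    have h2 : n - ((k : ℕ) : ZMod (4*k)) - ((k : ℕ) : ZMod (4*k)) = n - ((2*k : ℕ) : ZMod (4*k)) := by
      rw [← hc]; ring
    have := repFn_shift A ((2 * k : ℕ) : ZMod (4*k)) (n - ((2*k : ℕ) : ZMod (4*k))) hA2k
    rw [sub_add_cancel] at this
    rw [h2, ← this]
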